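/- Let 𝔽 be ℝ or ℂ, X a Banach space over 𝔽 with dim X ≥ 2, and 𝒜 a standard operator algebra in B(X). If S ∈ 𝒜 satisfies [A, S]₃ = 0 for all A ∈ 𝒜, then there exist a scalar λ ∈ 𝔽 and an element N ∈ 𝒜 with N² = 0 such that S = λI + N. -/

import Mathlib

set_option synthInstance.maxHeartbeats 400000
set_option maxHeartbeats 1000000

/-- The commutator `[A,B] = AB - BA` in a ring. -/
def bracket1 {R : Type*} [Ring R] (A B : R) : R := A * B - B * A

/-- The 3-commutator `[A,B]₃ = [[[A,B],B],B]` in a ring. -/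
def bracket3 {R : Type*} [Ring R] (A B : R) : R := bracket1 (bracket1 (bracket1 A B) B) B

/-- A standard operator algebra on a normed space `X` over `𝕜` is a subalgebra of
`B(X)` (automatically containing the identity) containing all finite-rank operators. -/
def IsStandardOperatorAlgebra (𝕜 : Type*) [RCLike 𝕜] (X : Type*)
    [NormedAddCommGroup X] [NormedSpace 𝕜 X]
    (𝒜 : Subalgebra 𝕜 (X →L[𝕜] X)) : Prop :=
  ∀ T : X →L[𝕜] X, FiniteDimensional 𝕜 (LinearMap.range (T : X →ₗ[𝕜] X)) → T ∈ 𝒜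

lemma bracket3_expand {R : Type*} [Ring R] (A B : R) :
    bracket3 A B = A*B*B*B - B*A*B*B - B*A*B*B - B*A*B*B
      + B*B*A*B + B*B*A*B + B*B*A*B - B*B*B*A := by
  simp only [bracket3, bracket1]
  noncomm_ring

/-- A continuous functional vanishing on a finite-dimensional subspace, equal to 1 at a
point outside it. -/
lemma exists_dual_ann {𝕜 X : Type*} [RCLike 𝕜] [NormedAddCommGroup X] [NormedSpace 𝕜 X]
    (U : Submodule 𝕜 X) [FiniteDimensional 𝕜 U] {w : X} (hw : w ∉ U) :
    ∃ f : X →L[𝕜] 𝕜, f w = 1 ∧ ∀ z ∈ U, f z = 0 := by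
  haveI : IsClosed (U : Set X) := U.closed_of_finiteDimensional
  let π : X →L[𝕜] (X ⧸ U) :=
    LinearMap.mkContinuous U.mkQ 1 (fun x => by
      simpa using Submodule.Quotient.norm_mk_le U x)
  have hπ : ∀ z : X, π z = Submodule.Quotient.mk z := fun z => rfl
  have hwne : π w ≠ 0 := by
    rw [hπ]
    simpa [Submodule.Quotient.mk_eq_zero] using hw
  obtain ⟨g, hg⟩ := SeparatingDual.exists_eq_one (R := 𝕜) hwne
  refine ⟨g.comp π, by simpa using hg, fun z hz => ?_⟩
  have : π z = 0 := by rw [hπ]; simpa [Submodule.Quotient.mk_eq_zero] using hz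
  simp [this]

theorem stmt_6 {𝕜 X : Type*} [RCLike 𝕜] [NormedAddCommGroup X] [NormedSpace 𝕜 X]
    [CompleteSpace X] (hdim : 2 ≤ Module.rank 𝕜 X)
    (𝒜 : Subalgebra 𝕜 (X →L[𝕜] X)) (h𝒜 : IsStandardOperatorAlgebra 𝕜 X 𝒜)
    (S : 𝒜) (h : ∀ A : 𝒜, bracket3 A S = 0) :
    ∃ (l : 𝕜) (N : 𝒜), N * N = 0 ∧ S = l • (1 : 𝒜) + N := by
  set T : X →L[𝕜] X := (S : X →L[𝕜] X) with hT
  have hntr : Nontrivial X := by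
    by_contra hn
    rw [not_nontrivial_iff_subsingleton] at hn
    rw [rank_subsingleton' 𝕜 X] at hdim
    exact absurd hdim (by norm_num)
  -- the key pointwise identity
  have key : ∀ (x y : X) (f : X →L[𝕜] 𝕜),
      f (T (T (T y))) • x - f (T (T y)) • T x - f (T (T y)) • T x - f (T (T y)) • T x
      + f (T y) • T (T x) + f (T y) • T (T x) + f (T y) • T (T x)
      - f y • T (T (T x)) = 0 := by
    intro x y f
    have hmem : f.smulRight x ∈ 𝒜 := by
      apply h𝒜
      have hle : LinearMap.range ((f.smulRight x : X →L[𝕜] X) : X →ₗ[𝕜] X) ≤ 𝕜 ∙ x := by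
        rintro z ⟨w, rfl⟩
        exact Submodule.smul_mem _ _ (Submodule.mem_span_singleton_self x)
      exact Submodule.finiteDimensional_of_le hle
    have h3 := h ⟨f.smulRight x, hmem⟩
    have hop : bracket3 (f.smulRight x) T = 0 := by
      have := congrArg (Subalgebra.val 𝒜) h3
      simpa [bracket3, bracket1, map_sub, map_mul] using this
    rw [bracket3_expand] at hop
    have hpt := congrArg (fun C : X →L[𝕜] X => C y) hop
    simpa [ContinuousLinearMap.mul_apply, ContinuousLinearMap.smulRight_apply,
      ContinuousLinearMap.sub_apply, ContinuousLinearMap.add_apply, map_smul,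
      ContinuousLinearMap.zero_apply] using hpt
  by_cases hc : ∀ y : X, ∃ c : 𝕜, T y = c • y
  · -- S is locally scalar, hence scalar
    obtain ⟨y₀, hy₀⟩ := exists_ne (0 : X)
    obtain ⟨lam, hlam⟩ := hc y₀
    have hsc : ∀ z : X, T z = lam • z := by
      intro z
      by_cases hz0 : z = 0
      · simp [hz0]
      by_cases hdep : ∃ t : 𝕜, z = t • y₀
      · obtain ⟨t, rfl⟩ := hdep
        rw [map_smul, hlam, smul_comm]
      · obtain ⟨c, hcz⟩ := hc z
        obtain ⟨d, hdz⟩ := hc (y₀ + z)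
        rw [map_add, hlam, hcz, smul_add] at hdz
        have heq : (lam - d) • y₀ + (c - d) • z = 0 := by
          linear_combination (norm := module) hdz
        have hcd : c = d := by
          by_contra hne
          apply hdep
          have hcd0 : c - d ≠ 0 := sub_ne_zero_of_ne hne
          refine ⟨(c - d)⁻¹ * (d - lam), ?_⟩
          have h2 : (c - d) • z = (d - lam) • y₀ := by
            linear_combination (norm := module) heq
          calc z = (c - d)⁻¹ • ((c - d) • z) := by
                rw [smul_smul, inv_mul_cancel₀ hcd0, one_smul]
            _ = ((c - d)⁻¹ * (d - lam)) • y₀ := by rw [h2, smul_smul]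
        have hld : lam = d := by
          rw [hcd, sub_self, zero_smul, add_zero, smul_eq_zero] at heq
          rcases heq with h1 | h1
          · exact sub_eq_zero.mp h1
          · exact absurd h1 hy₀
        rw [hcz, hcd, ← hld]
      -- done
    refine ⟨lam, 0, by simp, ?_⟩
    apply Subtype.ext
    ext z
    show T z = _
    rw [hsc z]
    simp
  · push_neg at hc
    obtain ⟨u, hu⟩ := hc
    have hu0 : u ≠ 0 := by
      intro h0
      exact hu 0 (by simp [h0])
    -- T u ∉ 𝕜 ∙ u
    have hTu : T u ∉ (𝕜 ∙ u) := by
      intro hmem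
      obtain ⟨c, hcu⟩ := Submodule.mem_span_singleton.mp hmem
      exact hu c hcu.symm
    by_cases hsq : T (T u) ∈ Submodule.span 𝕜 {u, T u}
    · -- main case : T² u = a u + b T u
      obtain ⟨a, b, hab⟩ := Submodule.mem_span_pair.mp hsq
      obtain ⟨f, hf1, hf0⟩ := exists_dual_ann (𝕜 ∙ u) hTu
      have fu : f u = 0 := hf0 u (Submodule.mem_span_singleton_self u)
      have fTu : f (T u) = 1 := hf1
      have fT2 : f (T (T u)) = b := by
        rw [← hab]; simp [fu, fTu]
      have fT3 : f (T (T (T u))) = a + b * b := by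
        have h3 : T (T (T u)) = a • T u + b • T (T u) := by
          conv_lhs => rw [← hab]
          rw [map_add, map_smul, map_smul]
        rw [h3]; simp [map_add, map_smul, fTu, fT2]
      have hTT : ∀ x : X, T (T x) = b • T x - ((a + b * b) / 3) • x := by
        intro x
        have e := key x u f
        rw [fu, fTu, fT2, fT3] at e
        linear_combination (norm := module) ((1 : 𝕜)/3) • e
      -- evaluate at u to get a relation
      have hrel : a + (a + b * b) / 3 = 0 := by
        have e1 := hTT u
        rw [← hab] at e1
        have e2 : (a + (a + b * b) / 3) • u = 0 := by
          linear_combination (norm := module) e1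
        rcases smul_eq_zero.mp e2 with h1 | h1
        · exact h1
        · exact absurd h1 hu0
      have hb2 : a + b * b / 4 = 0 := by linear_combination (3/4 : 𝕜) * hrel
      have hq : ∀ x : X, T (T x) = b • T x + a • x := by
        intro x
        rw [hTT x]
        have : ((a + b * b) / 3) = -a := by linear_combination hrel
        rw [this]
        module
      refine ⟨b / 2, S - (b / 2) • 1, ?_, by abel⟩
      apply Subtype.ext
      have hcoe : ((S - (b/2) • (1:𝒜)) * (S - (b/2) • (1:𝒜)) : 𝒜).val
          = (T - (b/2) • 1) * (T - (b/2) • 1) := by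
        push_cast
        rfl
      rw [hcoe]
      ext x
      simp only [ContinuousLinearMap.mul_apply, ContinuousLinearMap.sub_apply,
        ContinuousLinearMap.smul_apply, ContinuousLinearMap.one_apply, map_sub, map_smul,
        ContinuousLinearMap.zero_apply, ZeroMemClass.coe_zero]
      rw [hq x]
      match_scalars <;> first | linear_combination hb2 | linear_combination -hb2 | ring
    · -- impossible case: u, Tu, T²u independent forces S scalar
      exfalso
      haveI : FiniteDimensional 𝕜 (Submodule.span 𝕜 ({u, T u} : Set X)) :=
        FiniteDimensional.span_of_finite 𝕜 (Set.toFinite _)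
      obtain ⟨f, hf1, hf0⟩ := exists_dual_ann (Submodule.span 𝕜 {u, T u}) hsq
      have fu : f u = 0 := hf0 u (Submodule.subset_span (by simp))
      have fTu : f (T u) = 0 := hf0 (T u) (Submodule.subset_span (by simp))
      have e := key u u f
      rw [fu, fTu, hf1] at e
      apply hu (f (T (T (T u))) / 3)
      linear_combination (norm := module) ((-1:𝕜)/3) • e
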